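/- arXiv:1908.07941 — 3 statements merged into one kernel-verified Lean document; each statement's English description precedes it below -/
import Mathlib

section
/- Let d ≥ 1 and let Θ ⊆ Ω_{⟨d]} be any set of compositions that contains the one-entry composition (d). Then the space 𝒫_d^Θ is contractible. In particular, 𝒫_d^Θ is contractible for every nonempty closed Θ ⊆ Ω_{⟨d]}. -/
open Polynomial

/-- The monic real polynomial `x^d + a_{d-1}x^{d-1} + ⋯ + a_0` determined by the
coefficient vector `a : Fin d → ℝ`.  The space `𝒫_d` of monic real degree-`d`
polynomials is modelled as the euclidean space `Fin d → ℝ` of coefficient vectors. -/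
noncomputable def monicPoly (d : ℕ) (a : Fin d → ℝ) : Polynomial ℝ :=
  X ^ d + ∑ i : Fin d, C (a i) * X ^ (i : ℕ)

/-- `P` has real root multiplicity pattern `ω`: there is a strictly increasing list `xs`
of real numbers whose members are exactly the real roots of `P`, and the corresponding
list of root multiplicities is `ω`. -/
def HasPattern (P : Polynomial ℝ) (ω : List ℕ) : Prop :=
  ∃ xs : List ℝ, xs.Pairwise (· < ·) ∧ (∀ x : ℝ, P.IsRoot x ↔ x ∈ xs) ∧
    List.Forall₂ (fun x m => rootMultiplicity x P = m) xs ω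

/-- `Ω_{⟨d]}`: compositions (lists of positive integers) `ω` with `|ω| ≤ d` and
`|ω| ≡ d (mod 2)`. -/
def OmegaLe (d : ℕ) : Set (List ℕ) :=
  {ω | (∀ m ∈ ω, 0 < m) ∧ ω.sum ≤ d ∧ ω.sum % 2 = d % 2}

/-- `Ω_{⟨d], ≥ k}`: those `ω ∈ Ω_{⟨d]}` with `|ω|' = |ω| - ℓ(ω) ≥ k`. -/
def OmegaGe (d k : ℕ) : Set (List ℕ) :=
  {ω | ω ∈ OmegaLe d ∧ k ≤ ω.sum - ω.length}

/-- The stratum `𝒫_d^ω` of monic degree-`d` polynomials with real root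
multiplicity pattern `ω` (as a set of coefficient vectors). -/
def Pstrat (d : ℕ) (ω : List ℕ) : Set (Fin d → ℝ) :=
  {a | HasPattern (monicPoly d a) ω}

/-- `𝒫_d^Θ = ⋃_{ω ∈ Θ} 𝒫_d^ω`. -/
def PTheta (d : ℕ) (Θ : Set (List ℕ)) : Set (Fin d → ℝ) :=
  {a | ∃ ω ∈ Θ, HasPattern (monicPoly d a) ω}

/-- `𝒫_d^{cΘ} = 𝒫_d ∖ 𝒫_d^Θ`. -/
def PcTheta (d : ℕ) (Θ : Set (List ℕ)) : Set (Fin d → ℝ) := (PTheta d Θ)ᶜ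

/-- One merge operation (replace two consecutive entries by their sum) or one
insertion operation (insert a new entry `2` at any position) applied to a composition. -/
inductive PatStep : List ℕ → List ℕ → Prop where
  | merge (pre post : List ℕ) (a b : ℕ) :
      PatStep (pre ++ a :: b :: post) (pre ++ (a + b) :: post)
  | insert (pre post : List ℕ) :
      PatStep (pre ++ post) (pre ++ 2 :: post)

/-- `ω' ≼ ω`: `ω'` can be obtained from `ω` by a finite (possibly empty) sequence of
merge and insertion operations. -/
def PatLe (ω' ω : List ℕ) : Prop := Relation.ReflTransGen PatStep ω ω'

/-- The composition `(1^i, 3, 1^j)`. -/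
def comp3 (i j : ℕ) : List ℕ := List.replicate i 1 ++ 3 :: List.replicate j 1

/-- The composition `(1^i, 2, 1^j, 2, 1^ℓ)`. -/
def comp22 (i j l : ℕ) : List ℕ :=
  List.replicate i 1 ++ 2 :: (List.replicate j 1 ++ 2 :: List.replicate l 1)

/-- `d(d-2)/4` for even `d`, `(d-1)²/4` for odd `d`. -/
def wedgeRank (d : ℕ) : ℕ := if Even d then d * (d - 2) / 4 else (d - 1) ^ 2 / 4


lemma coeff_monicPoly_lt (d : ℕ) (a : Fin d → ℝ) (i : Fin d) :
    (monicPoly d a).coeff i = a i := by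
  rw [monicPoly, coeff_add, coeff_X_pow, finset_sum_coeff]
  have h1 : ((i : ℕ) = d) = False := by simp [Fin.is_lt i |>.ne]
  simp only [coeff_C_mul, coeff_X_pow]
  rw [Finset.sum_eq_single i (by intro b _ hb; rw [if_neg (fun h => hb (Fin.ext h.symm)), mul_zero]) (by simp)]
  simp [h1]

lemma coeff_monicPoly_d (d : ℕ) (a : Fin d → ℝ) :
    (monicPoly d a).coeff d = 1 := by
  rw [monicPoly, coeff_add, coeff_X_pow, finset_sum_coeff]
  simp only [coeff_C_mul, coeff_X_pow]
  rw [Finset.sum_eq_zero (by intro b _; simp [(Fin.is_lt b).ne'])]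
  simp

lemma degree_sum_lt (d : ℕ) (a : Fin d → ℝ) (hd : 0 < d) :
    (∑ i : Fin d, C (a i) * X ^ (i : ℕ)).degree < ((d : ℕ) : WithBot ℕ) := by
  apply lt_of_le_of_lt (degree_sum_le _ _)
  rw [Finset.sup_lt_iff (by exact_mod_cast WithBot.bot_lt_coe d)]
  intro i _
  calc (C (a i) * X ^ (i : ℕ)).degree ≤ ((i : ℕ) : WithBot ℕ) :=
        degree_C_mul_X_pow_le (i : ℕ) (a i)
    _ < ((d : ℕ) : WithBot ℕ) := by exact_mod_cast i.is_lt

lemma monicPoly_natDegree (d : ℕ) (a : Fin d → ℝ) : (monicPoly d a).natDegree = d := by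
  rcases Nat.eq_zero_or_pos d with rfl | hd
  · simp [monicPoly]
  have h := degree_add_eq_left_of_degree_lt (p := (X : ℝ[X]) ^ d)
    (q := ∑ i : Fin d, C (a i) * X ^ (i : ℕ)) (by simpa using degree_sum_lt d a hd)
  rw [monicPoly]
  have : ((X : ℝ[X]) ^ d + ∑ i : Fin d, C (a i) * X ^ (i : ℕ)).degree = d := by
    rw [h, degree_X_pow]
  exact natDegree_eq_of_degree_eq_some this

lemma monicPoly_monic (d : ℕ) (a : Fin d → ℝ) : (monicPoly d a).Monic := by
  rw [Monic, leadingCoeff, monicPoly_natDegree]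
  exact coeff_monicPoly_d d a

lemma monicPoly_ne_zero (d : ℕ) (a : Fin d → ℝ) : monicPoly d a ≠ 0 :=
  (monicPoly_monic d a).ne_zero

lemma monicPoly_zero (d : ℕ) : monicPoly d (0 : Fin d → ℝ) = X ^ d := by
  simp [monicPoly]

lemma monicPoly_scale (d : ℕ) (a : Fin d → ℝ) (s : ℝ) :
    monicPoly d (fun i => s ^ (d - (i : ℕ)) * a i) = (monicPoly d a).scaleRoots s := by
  ext n
  rw [coeff_scaleRoots, monicPoly_natDegree]
  rcases lt_trichotomy n d with h | rfl | h
  · rw [coeff_monicPoly_lt d _ ⟨n, h⟩, coeff_monicPoly_lt d a ⟨n, h⟩]; ring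
  · rw [coeff_monicPoly_d, coeff_monicPoly_d]; simp
  · have h1 : (monicPoly d (fun i => s ^ (d - (i : ℕ)) * a i)).coeff n = 0 :=
      coeff_eq_zero_of_natDegree_lt (by rw [monicPoly_natDegree]; exact h)
    have h2 : (monicPoly d a).coeff n = 0 :=
      coeff_eq_zero_of_natDegree_lt (by rw [monicPoly_natDegree]; exact h)
    rw [h1, h2, zero_mul]

lemma monicPoly_coeffs {d : ℕ} {Q : ℝ[X]} (hm : Q.Monic) (hdeg : Q.natDegree = d) :
    monicPoly d (fun i => Q.coeff i) = Q := by
  ext n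
  rcases lt_trichotomy n d with h | rfl | h
  · exact coeff_monicPoly_lt d _ ⟨n, h⟩
  · rw [coeff_monicPoly_d]
    have := hm.coeff_natDegree
    rw [hdeg] at this
    exact this.symm
  · rw [coeff_eq_zero_of_natDegree_lt (by rw [monicPoly_natDegree]; exact h),
      coeff_eq_zero_of_natDegree_lt (by rw [hdeg]; exact h)]

lemma eval_scaleRoots' (P : ℝ[X]) (s x : ℝ) :
    (P.scaleRoots s).eval (s * x) = s ^ P.natDegree * P.eval x := by
  have := scaleRoots_eval₂_mul (p := P) (RingHom.id ℝ) x s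
  simp only [RingHom.id_apply] at this
  exact this

lemma isRoot_scaleRoots_iff (P : ℝ[X]) {s : ℝ} (hs : s ≠ 0) (x : ℝ) :
    (P.scaleRoots s).IsRoot (s * x) ↔ P.IsRoot x := by
  unfold IsRoot
  rw [eval_scaleRoots']
  simp [pow_eq_zero_iff, hs]

lemma scaleRoots_X_sub_C (c s : ℝ) : (X - C c).scaleRoots s = X - C (s * c) := by
  ext n
  rw [coeff_scaleRoots, natDegree_X_sub_C]
  rcases n with _ | _ | n <;> simp [coeff_X, coeff_C] <;> ring

lemma scaleRoots_pow (P : ℝ[X]) (s : ℝ) (n : ℕ) :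
    (P ^ n).scaleRoots s = (P.scaleRoots s) ^ n := by
  induction n with
  | zero => simp
  | succ n ih => rw [pow_succ, mul_scaleRoots_of_noZeroDivisors, ih, pow_succ]

lemma rootMultiplicity_scaleRoots (P : ℝ[X]) (hP : P ≠ 0) {s : ℝ} (hs : s ≠ 0) (x : ℝ) :
    rootMultiplicity (s * x) (P.scaleRoots s) = rootMultiplicity x P := by
  have hP' : P.scaleRoots s ≠ 0 := scaleRoots_ne_zero hP s
  apply le_antisymm
  · rw [le_rootMultiplicity_iff hP]
    have h := pow_rootMultiplicity_dvd (P.scaleRoots s) (s * x)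
    have h2 := scaleRoots_dvd' ((X - C (s*x)) ^ rootMultiplicity (s*x) (P.scaleRoots s))
      (P.scaleRoots s) (IsUnit.mk0 _ (inv_ne_zero hs)) h
    rw [← scaleRoots_mul, mul_inv_cancel₀ hs, scaleRoots_one, scaleRoots_pow,
      scaleRoots_X_sub_C] at h2
    have : s⁻¹ * (s * x) = x := by field_simp
    rwa [this] at h2
  · rw [le_rootMultiplicity_iff hP']
    have h := pow_rootMultiplicity_dvd P x
    have h2 := scaleRoots_dvd' ((X - C x) ^ rootMultiplicity x P) P (IsUnit.mk0 s hs) h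
    rwa [scaleRoots_pow, scaleRoots_X_sub_C] at h2

lemma hasPattern_scaleRoots {P : ℝ[X]} {ω : List ℕ} (hP : P ≠ 0) {s : ℝ} (hs : 0 < s)
    (h : HasPattern P ω) : HasPattern (P.scaleRoots s) ω := by
  obtain ⟨xs, hsort, hroot, hmult⟩ := h
  refine ⟨xs.map (fun x => s * x), ?_, ?_, ?_⟩
  · exact List.Pairwise.map _ (fun a b hab => by nlinarith) hsort
  · intro y
    have : y = s * (s⁻¹ * y) := by field_simp
    rw [this, isRoot_scaleRoots_iff P hs.ne' _, hroot]
    constructor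
    · intro hm; exact List.mem_map.mpr ⟨_, hm, rfl⟩
    · intro hm
      obtain ⟨x, hx, hxy⟩ := List.mem_map.mp hm
      have hx2 : s⁻¹ * (s * x) = x := by field_simp
      have : s⁻¹ * y = x := by
        have := congrArg (fun z => s⁻¹ * z) hxy
        simpa [hx2, ← mul_assoc, inv_mul_cancel₀ hs.ne'] using this.symm
      rw [this]; exact hx
  · rw [List.forall₂_map_left_iff]
    exact hmult.imp (fun {x m} hxm => by rw [rootMultiplicity_scaleRoots P hP hs.ne']; exact hxm)

lemma hasPattern_X_pow (d : ℕ) (hd : 1 ≤ d) : HasPattern (X ^ d : ℝ[X]) [d] := by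
  refine ⟨[0], List.pairwise_singleton _ 0, ?_, ?_⟩
  · intro x
    simp only [IsRoot, eval_pow, eval_X, pow_eq_zero_iff (by omega : d ≠ 0)]
    simp
  · refine List.Forall₂.cons ?_ List.Forall₂.nil
    have : (X : ℝ[X]) ^ d = (X - C 0) ^ d := by simp
    rw [this, rootMultiplicity_X_sub_C_pow]

lemma hasPattern_X_pow_unique {d : ℕ} (hd : 1 ≤ d) {ω : List ℕ}
    (h : HasPattern (X ^ d : ℝ[X]) ω) : ω = [d] := by
  obtain ⟨xs, hsort, hroot, hmult⟩ := h
  have hmem : ∀ x : ℝ, x ∈ xs ↔ x = 0 := by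
    intro x
    rw [← hroot]
    simp only [IsRoot, eval_pow, eval_X, pow_eq_zero_iff (by omega : d ≠ 0)]
  have hxs : xs = [0] := by
    match xs, hsort with
    | [], _ => exact absurd ((hmem 0).mpr rfl) (by simp)
    | [y], _ => rw [(hmem y).mp (by simp)]
    | y :: z :: t, hs =>
      have hy : y = 0 := (hmem y).mp (by simp)
      have hz : z = 0 := (hmem z).mp (by simp)
      have := List.rel_of_pairwise_cons hs (a' := z) (by simp)
      rw [hy, hz] at this; exact absurd this (lt_irrefl 0)
  subst hxs
  match ω, hmult with
  | [m], List.Forall₂.cons h1 _ =>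
    rw [← h1]
    have : (X : ℝ[X]) ^ d = (X - C 0) ^ d := by simp
    rw [this, rootMultiplicity_X_sub_C_pow]

noncomputable def rpoly : ℕ → List ℕ → ℝ[X]
  | _, [] => 1
  | i, m :: ω => (X - C (i : ℝ)) ^ m * rpoly (i + 1) ω

lemma rpoly_monic (i : ℕ) (ω : List ℕ) : (rpoly i ω).Monic := by
  induction ω generalizing i with
  | nil => exact monic_one
  | cons m ω ih => exact ((monic_X_sub_C _).pow m).mul (ih (i+1))

lemma rpoly_ne_zero (i : ℕ) (ω : List ℕ) : rpoly i ω ≠ 0 := (rpoly_monic i ω).ne_zero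

lemma rpoly_natDegree (i : ℕ) (ω : List ℕ) : (rpoly i ω).natDegree = ω.sum := by
  induction ω generalizing i with
  | nil => simp [rpoly]
  | cons m ω ih =>
    rw [rpoly, natDegree_mul (pow_ne_zero _ (X_sub_C_ne_zero _)) (rpoly_ne_zero _ _),
      natDegree_pow, natDegree_X_sub_C, ih]
    simp [mul_one, List.sum_cons]

lemma rpoly_isRoot_iff (i : ℕ) (ω : List ℕ) (hpos : ∀ m ∈ ω, 0 < m) (x : ℝ) :
    (rpoly i ω).IsRoot x ↔ ∃ j < ω.length, x = ((i + j : ℕ) : ℝ) := by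
  induction ω generalizing i with
  | nil => simp [rpoly, IsRoot]
  | cons m ω ih =>
    rw [rpoly, IsRoot, eval_mul, mul_eq_zero, eval_pow, eval_sub, eval_X, eval_C,
      pow_eq_zero_iff (hpos m (by simp)).ne', sub_eq_zero]
    constructor
    · rintro (rfl | hr)
      · exact ⟨0, by simp⟩
      · obtain ⟨j, hj, rfl⟩ := (ih (i+1) (fun m hm => hpos m (by simp [hm]))).mp hr
        exact ⟨j + 1, by simpa using hj, by push_cast; ring⟩
    · rintro ⟨j, hj, rfl⟩
      rcases j with _ | j
      · left; simp
      · right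
        apply (ih (i+1) (fun m hm => hpos m (by simp [hm]))).mpr
        exact ⟨j, by simpa using hj, by push_cast; ring⟩

lemma rm_X_sub_C_pow_ne (c x : ℝ) (hx : x ≠ c) (m : ℕ) :
    rootMultiplicity x ((X - C c) ^ m) = 0 :=
  rootMultiplicity_eq_zero (by simp [IsRoot, sub_eq_zero, hx])

lemma rpoly_rootMultiplicity (i : ℕ) (ω : List ℕ) (hpos : ∀ m ∈ ω, 0 < m)
    (j : ℕ) (hj : j < ω.length) :
    rootMultiplicity ((i + j : ℕ) : ℝ) (rpoly i ω) = ω.get ⟨j, hj⟩ := by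
  induction ω generalizing i j with
  | nil => simp at hj
  | cons m ω ih =>
    rw [rpoly, rootMultiplicity_mul (mul_ne_zero (pow_ne_zero _ (X_sub_C_ne_zero _))
      (rpoly_ne_zero _ _))]
    rcases j with _ | j
    · have h1 : rootMultiplicity ((i + 0 : ℕ) : ℝ) ((X - C (i:ℝ)) ^ m) = m := by
        simpa using rootMultiplicity_X_sub_C_pow (i : ℝ) m
      have h2 : rootMultiplicity ((i + 0 : ℕ) : ℝ) (rpoly (i+1) ω) = 0 := by
        apply rootMultiplicity_eq_zero
        rw [rpoly_isRoot_iff _ _ (fun m hm => hpos m (by simp [hm]))]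
        rintro ⟨j', hj', he⟩
        have : (i + 0 : ℕ) = (i + 1 + j' : ℕ) := Nat.cast_injective he
        omega
      rw [h1, h2]; simp
    · have h1 : rootMultiplicity ((i + (j+1) : ℕ) : ℝ) ((X - C (i:ℝ)) ^ m) = 0 := by
        apply rm_X_sub_C_pow_ne
        intro he
        have : (i + (j+1) : ℕ) = i := Nat.cast_injective he
        omega
      have h2 := ih (i+1) (fun m hm => hpos m (by simp [hm])) j (by simpa using hj)
      have he : ((i + (j+1) : ℕ) : ℝ) = ((i + 1 + j : ℕ) : ℝ) := by norm_cast; omega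
      rw [h1, he, h2]
      simp

lemma sq_add_one_monic : (X ^ 2 + C (1:ℝ)).Monic :=
  monic_X_pow_add (by simpa using degree_C_le.trans_lt (by norm_num))

lemma sq_add_one_eval_ne (x : ℝ) (k : ℕ) : ((X ^ 2 + C (1:ℝ)) ^ k).eval x ≠ 0 := by
  simp only [eval_pow, eval_add, eval_pow, eval_X, eval_C]
  positivity

noncomputable def realQ (ω : List ℕ) (k : ℕ) : ℝ[X] := rpoly 0 ω * (X ^ 2 + C (1:ℝ)) ^ k

lemma realQ_monic (ω : List ℕ) (k : ℕ) : (realQ ω k).Monic :=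
  (rpoly_monic 0 ω).mul (sq_add_one_monic.pow k)

lemma realQ_natDegree (ω : List ℕ) (k : ℕ) : (realQ ω k).natDegree = ω.sum + 2 * k := by
  rw [realQ, natDegree_mul (rpoly_ne_zero 0 ω) ((sq_add_one_monic.pow k).ne_zero),
    rpoly_natDegree, natDegree_pow]
  have : (X ^ 2 + C (1:ℝ)).natDegree = 2 := by
    compute_degree!
  rw [this, mul_comm]

lemma realQ_hasPattern (ω : List ℕ) (hpos : ∀ m ∈ ω, 0 < m) (k : ℕ) :
    HasPattern (realQ ω k) ω := by
  refine ⟨(List.range ω.length).map (fun j : ℕ => (j : ℝ)), ?_, ?_, ?_⟩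
  · rw [List.pairwise_map]
    exact (List.pairwise_lt_range (n := _)).imp (fun h => by exact_mod_cast h)
  · intro x
    rw [realQ, IsRoot, eval_mul, mul_eq_zero]
    have h2 := sq_add_one_eval_ne x k
    rw [or_iff_left h2, ← IsRoot, rpoly_isRoot_iff 0 ω hpos]
    simp [List.mem_map, List.mem_range, eq_comm]
  · rw [List.forall₂_iff_get]
    refine ⟨by rw [List.length_map, List.length_range], ?_⟩
    intro j h1 h2
    simp only [List.get_eq_getElem, List.getElem_map, List.getElem_range]
    have hj : j < ω.length := by rwa [List.length_map, List.length_range] at h1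
    rw [realQ, rootMultiplicity_mul (mul_ne_zero (rpoly_ne_zero 0 ω)
      ((sq_add_one_monic.pow k).ne_zero))]
    have hz : rootMultiplicity ((j:ℝ)) ((X ^ 2 + C (1:ℝ)) ^ k) = 0 :=
      rootMultiplicity_eq_zero (sq_add_one_eval_ne (j:ℝ) k)
    have := rpoly_rootMultiplicity 0 ω hpos j hj
    simp only [Nat.zero_add] at this
    rw [hz, this]
    simp

lemma scaleVec_mem_pos {d : ℕ} {Θ : Set (List ℕ)} {a : Fin d → ℝ} (ha : a ∈ PTheta d Θ)
    {s : ℝ} (hs : 0 < s) :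
    (fun i : Fin d => s ^ (d - (i : ℕ)) * a i) ∈ PTheta d Θ := by
  obtain ⟨ω, hω, hp⟩ := ha
  exact ⟨ω, hω, by
    rw [monicPoly_scale]
    exact hasPattern_scaleRoots (monicPoly_ne_zero d a) hs hp⟩

lemma zeroVec_mem {d : ℕ} {Θ : Set (List ℕ)} (hd : 1 ≤ d) (hΘd : [d] ∈ Θ) :
    (0 : Fin d → ℝ) ∈ PTheta d Θ :=
  ⟨[d], hΘd, by rw [monicPoly_zero]; exact hasPattern_X_pow d hd⟩

lemma scaleVec_mem {d : ℕ} {Θ : Set (List ℕ)} (hd : 1 ≤ d) (hΘd : [d] ∈ Θ)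
    {a : Fin d → ℝ} (ha : a ∈ PTheta d Θ) {s : ℝ} (hs : 0 ≤ s) :
    (fun i : Fin d => s ^ (d - (i : ℕ)) * a i) ∈ PTheta d Θ := by
  rcases eq_or_lt_of_le hs with rfl | hs'
  · have hz : (fun i : Fin d => (0:ℝ) ^ (d - (i : ℕ)) * a i) = (0 : Fin d → ℝ) := by
      funext i
      have : d - (i : ℕ) ≠ 0 := by have := i.is_lt; omega
      simp [zero_pow this]
    rw [hz]
    exact zeroVec_mem hd hΘd
  · exact scaleVec_mem_pos ha hs'

/-- If `Θ ⊆ Ω_{⟨d]}` contains the one-entry composition `(d)`, then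
`𝒫_d^Θ` is contractible; in particular this holds for every nonempty closed `Θ`. -/
theorem statement0 (d : ℕ) (hd : 1 ≤ d) (Θ : Set (List ℕ)) (hΘ : Θ ⊆ OmegaLe d)
    (h : [d] ∈ Θ ∨ (Θ.Nonempty ∧ IsClosed (PTheta d Θ))) :
    ContractibleSpace ↥(PTheta d Θ) := by
  have main : [d] ∈ Θ → ContractibleSpace ↥(PTheta d Θ) := by
    intro hΘd
    rw [contractible_iff_id_nullhomotopic]
    refine ⟨⟨0, zeroVec_mem hd hΘd⟩, ⟨?_⟩⟩
    refine {
      toFun := fun p => ⟨fun i => (1 - (p.1 : ℝ)) ^ (d - (i : ℕ)) * (p.2 : Fin d → ℝ) i,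
        scaleVec_mem hd hΘd p.2.2 (unitInterval.one_minus_nonneg p.1)⟩
      continuous_toFun := ?_
      map_zero_left := ?_
      map_one_left := ?_ }
    · apply Continuous.subtype_mk
      apply continuous_pi
      intro i
      exact ((continuous_const.sub (continuous_subtype_val.comp continuous_fst)).pow _).mul
        ((continuous_apply i).comp (continuous_subtype_val.comp continuous_snd))
    · intro x
      apply Subtype.ext
      funext i
      simp
    · intro x
      apply Subtype.ext
      funext i
      have : d - (i : ℕ) ≠ 0 := by have := i.is_lt; omega
      simp [zero_pow this]
  rcases h with hmem | ⟨⟨ω, hω⟩, hcl⟩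
  · exact main hmem
  apply main
  obtain ⟨hpos, hsum, hpar⟩ := hΘ hω
  set k := (d - ω.sum) / 2 with hkdef
  have hk : ω.sum + 2 * k = d := by omega
  set a : Fin d → ℝ := fun i => (realQ ω k).coeff i with hadef
  have haQ : monicPoly d a = realQ ω k :=
    monicPoly_coeffs (realQ_monic ω k) (by rw [realQ_natDegree, hk])
  have ha : a ∈ PTheta d Θ := ⟨ω, hω, by rw [haQ]; exact realQ_hasPattern ω hpos k⟩
  have h0mem : (0 : Fin d → ℝ) ∈ PTheta d Θ := by
    apply hcl.mem_of_tendsto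
      (f := fun n : ℕ => (fun i : Fin d => ((1:ℝ)/(n+1)) ^ (d - (i : ℕ)) * a i))
      (b := Filter.atTop)
    · rw [tendsto_pi_nhds]
      intro i
      have h1 : Filter.Tendsto (fun n : ℕ => (1:ℝ)/(n+1)) Filter.atTop (nhds 0) :=
        tendsto_one_div_add_atTop_nhds_zero_nat
      have hcont : Continuous (fun s : ℝ => s ^ (d - (i : ℕ)) * a i) := by continuity
      have h2 := (hcont.tendsto 0).comp h1
      have hne : d - (i : ℕ) ≠ 0 := by have := i.is_lt; omega
      simpa [Function.comp_def, inv_pow, zero_pow hne] using h2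
    · exact Filter.Eventually.of_forall (fun n => scaleVec_mem_pos ha (by positivity))
  obtain ⟨ω', hω', hp⟩ := h0mem
  rw [monicPoly_zero] at hp
  have : ω' = [d] := hasPattern_X_pow_unique hd hp
  rwa [this] at hω'
end

section
/- For every d ≥ 1, the graph 𝔊_d is connected, and its cycle rank (number of edges) − (number of vertices) + 1 equals d(d−2)/4 if d is even and (d−1)²/4 if d is odd; equivalently, 𝔊_d is homotopy equivalent to a wedge of that many circles. -/
open Polynomial

/-- The vertex set of the graph `𝔊_d`: compositions in `Ω_{⟨d]}` with `|ω|' ≤ 1`. -/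
def GdVert (d : ℕ) : Type := {ω : List ℕ // ω ∈ OmegaLe d ∧ ω.sum - ω.length ≤ 1}

/-- The graph `𝔊_d`: an edge joins two vertices exactly when one is obtained from the
other by a single merge or insertion operation. -/
def Gd (d : ℕ) : SimpleGraph (GdVert d) :=
  SimpleGraph.fromRel (fun v w => PatStep v.1 w.1)


namespace S4

/-! ### List-level combinatorics -/

def ones (k : ℕ) : List ℕ := List.replicate k 1
def two (i j : ℕ) : List ℕ := List.replicate i 1 ++ 2 :: List.replicate j 1

@[simp] lemma ones_sum (k : ℕ) : (ones k).sum = k := by simp [ones]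
@[simp] lemma ones_length (k : ℕ) : (ones k).length = k := by simp [ones]
@[simp] lemma two_sum (i j : ℕ) : (two i j).sum = i + j + 2 := by simp [two]; ring
@[simp] lemma two_length (i j : ℕ) : (two i j).length = i + j + 1 := by simp [two]; ring
lemma ones_pos (k : ℕ) : ∀ m ∈ ones k, 0 < m := by
  intro m hm
  simp only [ones, List.mem_replicate] at hm; omega
lemma two_pos (i j : ℕ) : ∀ m ∈ two i j, 0 < m := by
  intro m hm
  simp only [two, List.mem_append, List.mem_cons, List.mem_replicate] at hm
  rcases hm with ⟨_, h⟩ | h | ⟨_, h⟩ <;> omega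

lemma length_le_sum {l : List ℕ} (hpos : ∀ m ∈ l, 0 < m) : l.length ≤ l.sum := by
  induction l with
  | nil => simp
  | cons a t ih =>
    have := hpos a (by simp)
    have := ih (fun m hm => hpos m (List.mem_cons_of_mem _ hm))
    simp only [List.length_cons, List.sum_cons]; omega

lemma allones {l : List ℕ} (hpos : ∀ m ∈ l, 0 < m) (h : l.sum ≤ l.length) :
    l = ones l.length := by
  induction l with
  | nil => rfl
  | cons a t ih =>
    have ha := hpos a (by simp)
    have hpt : ∀ m ∈ t, 0 < m := fun m hm => hpos m (List.mem_cons_of_mem _ hm)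
    have hlt := length_le_sum hpt
    simp only [List.sum_cons, List.length_cons] at h
    have ha1 : a = 1 := by omega
    have ht := ih hpt (by omega)
    conv_lhs => rw [ha1, ht]
    rfl

lemma classify {l : List ℕ} (hpos : ∀ m ∈ l, 0 < m) (h : l.sum ≤ l.length + 1) :
    (∃ k, l = ones k) ∨ (∃ i j, l = two i j) := by
  induction l with
  | nil => exact Or.inl ⟨0, rfl⟩
  | cons a t ih =>
    have ha := hpos a (by simp)
    have hpt : ∀ m ∈ t, 0 < m := fun m hm => hpos m (List.mem_cons_of_mem _ hm)
    have hlt := length_le_sum hpt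
    simp only [List.sum_cons, List.length_cons] at h
    by_cases h1 : a = 1
    · subst h1
      rcases ih hpt (by omega) with ⟨k, rfl⟩ | ⟨i, j, rfl⟩
      · exact Or.inl ⟨k+1, by simp [ones, List.replicate_succ]⟩
      · exact Or.inr ⟨i+1, j, by simp [two, List.replicate_succ]⟩
    · have ha2 : a = 2 := by omega
      have ht : t = ones t.length := allones hpt (by omega)
      refine Or.inr ⟨0, t.length, ?_⟩
      conv_lhs => rw [ha2, ht]
      rfl

lemma ones_ne_two (k i j : ℕ) : ones k ≠ two i j := by
  intro h
  have h1 := congrArg List.sum h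
  have h2 := congrArg List.length h
  simp at h1 h2; omega

lemma two_inj {i j i' j' : ℕ} (h : two i j = two i' j') : i = i' ∧ j = j' := by
  induction i generalizing i' with
  | zero =>
    cases i' with
    | zero =>
      simp only [two, List.replicate, List.nil_append, List.cons.injEq] at h
      have := congrArg List.length h.2
      simp at this
      exact ⟨rfl, this⟩
    | succ n =>
      simp [two, List.replicate_succ] at h
  | succ m ih =>
    cases i' with
    | zero => simp [two, List.replicate_succ] at h
    | succ n =>
      simp only [two, List.replicate_succ, List.cons_append, List.cons.injEq] at h
      have := ih (i' := n) h.2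
      exact ⟨by omega, this.2⟩

lemma patstep_cases {ω ω' : List ℕ} (h : PatStep ω ω') :
    (ω'.sum = ω.sum ∧ ω.length = ω'.length + 1) ∨
    (ω'.sum = ω.sum + 2 ∧ ω'.length = ω.length + 1) := by
  cases h with
  | merge pre post a b =>
    left
    constructor <;> simp [List.sum_append, List.length_append] <;> ring
  | insert pre post =>
    right
    constructor <;> simp [List.sum_append, List.length_append] <;> ring

/-! ### Vertices of `𝔊_d` -/

def vOnes (d k : ℕ) (h1 : k ≤ d) (h2 : k % 2 = d % 2) : GdVert d :=
  ⟨ones k, ⟨ones_pos k, by simp [h1], by simp [h2]⟩, by simp⟩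

def vTwo (d i j : ℕ) (h1 : i + j + 2 ≤ d) (h2 : (i + j) % 2 = d % 2) : GdVert d :=
  ⟨two i j, ⟨two_pos i j, by simp [h1], by simp; omega⟩, by simp⟩

@[simp] lemma vOnes_val (d k h1 h2) : (vOnes d k h1 h2).1 = ones k := rfl
@[simp] lemma vTwo_val (d i j h1 h2) : (vTwo d i j h1 h2).1 = two i j := rfl

lemma vOnes_ne_vTwo (d k i j h1 h2 h3 h4) : vOnes d k h1 h2 ≠ vTwo d i j h3 h4 :=
  fun h => ones_ne_two k i j (congrArg Subtype.val h)

lemma step_ins (i j : ℕ) : PatStep (ones (i+j)) (two i j) := by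
  have h := PatStep.insert (List.replicate i 1) (List.replicate j 1)
  rwa [show List.replicate i 1 ++ List.replicate j 1 = ones (i+j) from
    (List.replicate_add i j 1).symm] at h

lemma step_mer (i j : ℕ) : PatStep (ones (i+j+2)) (two i j) := by
  have h := PatStep.merge (List.replicate i 1) (List.replicate j 1) 1 1
  have e1 : List.replicate i 1 ++ 1 :: 1 :: List.replicate j 1 = ones (i+j+2) := by
    rw [show i+j+2 = i + (j+2) by ring, ones, List.replicate_add]
    rfl
  rwa [e1] at h

lemma adj_ins (d i j k : ℕ) (hk : k = i + j) (h1 : k + 2 ≤ d) (h2 : k % 2 = d % 2)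
    (hk2 : k ≤ d) (h3 : i + j + 2 ≤ d) (h4 : (i + j) % 2 = d % 2) :
    (Gd d).Adj (vOnes d k hk2 h2) (vTwo d i j h3 h4) := by
  subst hk
  rw [Gd, SimpleGraph.fromRel_adj]
  exact ⟨vOnes_ne_vTwo _ _ _ _ _ _ _ _, Or.inl (step_ins i j)⟩

lemma adj_mer (d i j k : ℕ) (hk : k = i + j + 2) (h1 : k ≤ d) (h2 : k % 2 = d % 2)
    (h3 : i + j + 2 ≤ d) (h4 : (i + j) % 2 = d % 2) :
    (Gd d).Adj (vOnes d k h1 h2) (vTwo d i j h3 h4) := by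
  subst hk
  rw [Gd, SimpleGraph.fromRel_adj]
  exact ⟨vOnes_ne_vTwo _ _ _ _ _ _ _ _, Or.inl (step_mer i j)⟩

lemma vert_facts {d : ℕ} (v : GdVert d) :
    (∀ m ∈ v.1, 0 < m) ∧ v.1.sum ≤ d ∧ v.1.sum % 2 = d % 2 ∧
      v.1.length ≤ v.1.sum ∧ v.1.sum ≤ v.1.length + 1 := by
  obtain ⟨⟨hpos, hle, hpar⟩, hsl⟩ := v.2
  exact ⟨hpos, hle, hpar, length_le_sum hpos, by omega⟩

/-- structure of a PatStep between two vertices -/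
lemma step_shape {d : ℕ} (v w : GdVert d) (hstep : PatStep v.1 w.1) :
    ∃ i j, i + j + 2 ≤ d ∧ (i + j) % 2 = d % 2 ∧ w.1 = two i j ∧
      (v.1 = ones (i + j) ∨ v.1 = ones (i + j + 2)) := by
  obtain ⟨hposv, hlev, hparv, hv1, hv2⟩ := vert_facts v
  obtain ⟨hposw, hlew, hparw, hw1, hw2⟩ := vert_facts w
  have hvall : v.1.sum ≤ v.1.length := by
    rcases patstep_cases hstep with ⟨hs, hl⟩ | ⟨hs, hl⟩ <;> omega
  have hvones : v.1 = ones v.1.length := allones hposv hvall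
  have hwsum : w.1.sum = w.1.length + 1 := by
    rcases patstep_cases hstep with ⟨hs, hl⟩ | ⟨hs, hl⟩ <;> omega
  rcases classify hposw hw2 with ⟨k, hk⟩ | ⟨i, j, hij⟩
  · rw [hk] at hwsum; simp at hwsum
  · refine ⟨i, j, ?_, ?_, hij, ?_⟩
    · rw [hij] at hlew; simpa using hlew
    · rw [hij] at hparw; simp at hparw; omega
    · rcases patstep_cases hstep with ⟨hs, hl⟩ | ⟨hs, hl⟩
      · right
        rw [hvones]
        have : v.1.length = i + j + 2 := by rw [hij] at hs; simp at hs; omega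
        rw [this]
      · left
        rw [hvones]
        have : v.1.length = i + j := by rw [hij] at hs hl; simp at hs hl; omega
        rw [this]

/-! ### Counting vertices -/

def V0 (d : ℕ) : Type := {k : ℕ // k ≤ d ∧ k % 2 = d % 2}
def V1 (d : ℕ) : Type := {p : ℕ × ℕ // p.1 + p.2 + 2 ≤ d ∧ (p.1 + p.2) % 2 = d % 2}

def vertMap (d : ℕ) : V0 d ⊕ V1 d → GdVert d
  | Sum.inl k => vOnes d k.1 k.2.1 k.2.2
  | Sum.inr p => vTwo d p.1.1 p.1.2 p.2.1 p.2.2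

lemma vertMap_bij (d : ℕ) : Function.Bijective (vertMap d) := by
  constructor
  · rintro (⟨k, hk⟩ | ⟨⟨i, j⟩, hij⟩) (⟨k', hk'⟩ | ⟨⟨i', j'⟩, hij'⟩) h <;>
      simp only [vertMap] at h <;> have hv := congrArg Subtype.val h <;>
      simp only [vOnes_val, vTwo_val] at hv
    · have hl := congrArg List.length hv
      simp only [ones_length] at hl
      subst hl; rfl
    · exact absurd hv (ones_ne_two _ _ _)
    · exact absurd hv.symm (ones_ne_two _ _ _)
    · obtain ⟨e1, e2⟩ := two_inj hv
      subst e1; subst e2; rfl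
  · intro v
    obtain ⟨⟨hpos, hle, hpar⟩, hsl⟩ := v.2
    rcases classify hpos (by omega) with ⟨k, hk⟩ | ⟨i, j, hij⟩
    · refine ⟨Sum.inl ⟨k, ?_, ?_⟩, ?_⟩
      · rw [hk] at hle; simpa using hle
      · rw [hk] at hpar; simpa using hpar
      · simp only [vertMap]; exact Subtype.ext hk.symm
    · refine ⟨Sum.inr ⟨(i, j), ?_, ?_⟩, ?_⟩
      · rw [hij] at hle; simpa using hle
      · rw [hij] at hpar; simp at hpar; omega
      · simp only [vertMap]; exact Subtype.ext hij.symm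

/-! ### Counting edges -/

/-- the two graph neighbours of a `V1` vertex -/
def eTarget (d : ℕ) (p : V1 d) : Bool → GdVert d
  | true => vOnes d (p.1.1 + p.1.2 + 2) p.2.1 (by have := p.2.2; omega)
  | false => vOnes d (p.1.1 + p.1.2) (by have := p.2.1; omega) p.2.2

@[simp] lemma eTarget_val (d : ℕ) (p : V1 d) (b : Bool) :
    (eTarget d p b).1 = ones (if b then p.1.1 + p.1.2 + 2 else p.1.1 + p.1.2) := by
  cases b <;> rfl

def vT (d : ℕ) (p : V1 d) : GdVert d := vTwo d p.1.1 p.1.2 p.2.1 p.2.2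

@[simp] lemma vT_val (d : ℕ) (p : V1 d) : (vT d p).1 = two p.1.1 p.1.2 := rfl

lemma eTarget_ne_vT (d : ℕ) (p p' : V1 d) (b : Bool) : eTarget d p b ≠ vT d p' := by
  intro h
  have hv := congrArg Subtype.val h
  rw [eTarget_val, vT_val] at hv
  exact ones_ne_two _ _ _ hv

lemma eAdj (d : ℕ) (p : V1 d) (b : Bool) : (Gd d).Adj (eTarget d p b) (vT d p) := by
  cases b with
  | true => exact adj_mer d p.1.1 p.1.2 _ rfl p.2.1 (by have := p.2.2; omega) p.2.1 p.2.2
  | false => exact adj_ins d p.1.1 p.1.2 _ rfl p.2.1 p.2.2 (by have := p.2.1; omega) p.2.1 p.2.2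

def edgeMap (d : ℕ) (x : V1 d × Bool) : (Gd d).edgeSet :=
  ⟨s(eTarget d x.1 x.2, vT d x.1), (Gd d).mem_edgeSet.2 (eAdj d x.1 x.2)⟩

lemma edgeMap_bij (d : ℕ) : Function.Bijective (edgeMap d) := by
  constructor
  · rintro ⟨p, b⟩ ⟨p', b'⟩ h
    have h2 : s(eTarget d p b, vT d p) = s(eTarget d p' b', vT d p') :=
      congrArg Subtype.val h
    rw [Sym2.eq_iff] at h2
    have key : vT d p = vT d p' ∧ eTarget d p b = eTarget d p' b' := by
      rcases h2 with ⟨ha, hb⟩ | ⟨ha, hb⟩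
      · exact ⟨hb, ha⟩
      · exact absurd ha (eTarget_ne_vT d p p' b)
    obtain ⟨hT, hE⟩ := key
    have hpp : p = p' := by
      have := two_inj (by simpa using congrArg Subtype.val hT)
      exact Subtype.ext (Prod.ext this.1 this.2)
    subst hpp
    have hbb : b = b' := by
      have hs := congrArg (fun v : GdVert d => v.1.sum) hE
      simp only [eTarget_val, ones_sum] at hs
      cases b <;> cases b' <;> simp at hs <;> first | rfl | omega
    rw [hbb]
  · rintro ⟨q, hq⟩
    revert hq
    induction q using Sym2.ind with
    | _ v w =>
      intro hq
      rw [SimpleGraph.mem_edgeSet, Gd, SimpleGraph.fromRel_adj] at hq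
      obtain ⟨hne, hstep⟩ := hq
      have main : ∀ (v w : GdVert d), PatStep v.1 w.1 →
          ∃ x, (edgeMap d x).1 = s(v, w) := by
        intro v w hs
        obtain ⟨i, j, h1, h2, hw, hv⟩ := step_shape v w hs
        have hwT : w = vT d ⟨(i, j), h1, h2⟩ := Subtype.ext hw
        rcases hv with hv | hv
        · refine ⟨(⟨(i, j), h1, h2⟩, false), ?_⟩
          have hvT : v = eTarget d ⟨(i, j), h1, h2⟩ false := Subtype.ext hv
          show s(eTarget d ⟨(i, j), h1, h2⟩ false, vT d ⟨(i, j), h1, h2⟩) = s(v, w)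
          rw [← hvT, ← hwT]
        · refine ⟨(⟨(i, j), h1, h2⟩, true), ?_⟩
          have hvT : v = eTarget d ⟨(i, j), h1, h2⟩ true := Subtype.ext hv
          show s(eTarget d ⟨(i, j), h1, h2⟩ true, vT d ⟨(i, j), h1, h2⟩) = s(v, w)
          rw [← hvT, ← hwT]
      rcases hstep with hs | hs
      · obtain ⟨x, hx⟩ := main v w hs
        exact ⟨x, Subtype.ext hx⟩
      · obtain ⟨x, hx⟩ := main w v hs
        exact ⟨x, Subtype.ext (hx.trans Sym2.eq_swap)⟩

/-! ### Explicit bijections with rectangles -/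

def e0 (d : ℕ) : V0 d ≃ Fin (d / 2 + 1) where
  toFun k := ⟨(d - k.1) / 2, by have := k.2; omega⟩
  invFun m := ⟨d - 2 * m.1, by have := m.2; omega⟩
  left_inv k := by have := k.2; apply Subtype.ext; simp only; omega
  right_inv m := by have := m.2; apply Fin.ext; simp only; omega

def F1 (d i j : ℕ) : ℕ :=
  if i ≤ (i + j - d % 2) / 2 + d % 2 then (i + j - d % 2) / 2
  else i - (i + j - d % 2) / 2 - 1 - d % 2
def F2 (d i j : ℕ) : ℕ :=
  if i ≤ (i + j - d % 2) / 2 + d % 2 then i else (i + j - d % 2) / 2 + d % 2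
def G1 (d x y : ℕ) : ℕ := if y ≤ x + d % 2 then y else x + y + 1
def G2 (d x y : ℕ) : ℕ := if y ≤ x + d % 2 then 2 * x + d % 2 - y else y - x - 1 - d % 2

lemma hF1 {d i j : ℕ} (h1 : i + j + 2 ≤ d) (h2 : (i + j) % 2 = d % 2) : F1 d i j < d / 2 := by
  unfold F1; split_ifs <;> omega
lemma hF2 {d i j : ℕ} (h1 : i + j + 2 ≤ d) (h2 : (i + j) % 2 = d % 2) :
    F2 d i j < (d + 1) / 2 := by
  unfold F2; split_ifs <;> omega
lemma hGF {d i j : ℕ} (h1 : i + j + 2 ≤ d) (h2 : (i + j) % 2 = d % 2) :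
    G1 d (F1 d i j) (F2 d i j) = i ∧ G2 d (F1 d i j) (F2 d i j) = j := by
  unfold G1 G2 F1 F2; split_ifs <;> constructor <;> omega
lemma hGbound {d x y : ℕ} (hx : x < d / 2) (hy : y < (d + 1) / 2) :
    G1 d x y + G2 d x y + 2 ≤ d ∧ (G1 d x y + G2 d x y) % 2 = d % 2 := by
  unfold G1 G2; split_ifs <;> constructor <;> omega
lemma hFG {d x y : ℕ} (hx : x < d / 2) (hy : y < (d + 1) / 2) :
    F1 d (G1 d x y) (G2 d x y) = x ∧ F2 d (G1 d x y) (G2 d x y) = y := by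
  unfold F1 F2 G1 G2; split_ifs <;> constructor <;> omega

def e1 (d : ℕ) : V1 d ≃ Fin (d / 2) × Fin ((d + 1) / 2) where
  toFun p := (⟨F1 d p.1.1 p.1.2, hF1 p.2.1 p.2.2⟩, ⟨F2 d p.1.1 p.1.2, hF2 p.2.1 p.2.2⟩)
  invFun x := ⟨(G1 d x.1.1 x.2.1, G2 d x.1.1 x.2.1),
    (hGbound x.1.2 x.2.2).1, (hGbound x.1.2 x.2.2).2⟩
  left_inv p := by
    apply Subtype.ext
    obtain ⟨h1, h2⟩ := hGF p.2.1 p.2.2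
    exact Prod.ext h1 h2
  right_inv x := by
    obtain ⟨h1, h2⟩ := hFG x.1.2 x.2.2
    exact Prod.ext (Fin.ext h1) (Fin.ext h2)

/-! ### Connectivity -/

lemma reach_ones (d : ℕ) (hd : 1 ≤ d) :
    ∀ k (h1 : k ≤ d) (h2 : k % 2 = d % 2),
      (Gd d).Reachable (vOnes d (d % 2) (by omega) (by omega)) (vOnes d k h1 h2) := by
  intro k
  induction k using Nat.strong_induction_on with
  | _ k ih =>
    intro h1 h2
    by_cases hk : k = d % 2
    · subst hk
      exact SimpleGraph.Reachable.refl _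
    · have hk2 : 2 ≤ k := by omega
      have r1 := ih (k - 2) (by omega) (by omega) (by omega)
      have a1 := adj_ins d 0 (k - 2) (k - 2) (by omega) (by omega) (by omega)
        (by omega) (by omega) (by omega)
      have a2 := adj_mer d 0 (k - 2) k (by omega) h1 h2 (by omega) (by omega)
      exact r1.trans (a1.reachable.trans a2.reachable.symm)

lemma connected_Gd (d : ℕ) (hd : 1 ≤ d) : (Gd d).Connected := by
  rw [SimpleGraph.connected_iff]
  have key : ∀ v : GdVert d, (Gd d).Reachable (vOnes d (d % 2) (by omega) (by omega)) v := by
    intro v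
    obtain ⟨⟨hpos, hle, hpar⟩, hsl⟩ := v.2
    rcases classify hpos (by omega) with ⟨k, hk⟩ | ⟨i, j, hij⟩
    · have h1 : k ≤ d := by rw [hk] at hle; simpa using hle
      have h2 : k % 2 = d % 2 := by rw [hk] at hpar; simpa using hpar
      have hv : v = vOnes d k h1 h2 := Subtype.ext hk
      rw [hv]; exact reach_ones d hd k h1 h2
    · have h1 : i + j + 2 ≤ d := by rw [hij] at hle; simpa using hle
      have h2 : (i + j) % 2 = d % 2 := by rw [hij] at hpar; simp at hpar; omega
      have hv : v = vTwo d i j h1 h2 := Subtype.ext hij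
      rw [hv]
      exact (reach_ones d hd (i + j) (by omega) h2).trans
        (adj_ins d i j (i + j) rfl (by omega) h2 (by omega) h1 h2).reachable
  exact ⟨fun u v => (key u).symm.trans (key v), ⟨vOnes d (d % 2) (by omega) (by omega)⟩⟩

end S4

/-- `𝔊_d` is connected and its cycle rank
(#edges − #vertices + 1) equals `d(d−2)/4` for even `d` and `(d−1)²/4` for odd `d`
(stated without natural subtraction as #edges + 1 = #vertices + rank). -/
theorem statement4 (d : ℕ) (hd : 1 ≤ d) :
    (Gd d).Connected ∧
      Nat.card (Gd d).edgeSet + 1 = Nat.card (GdVert d) + wedgeRank d := by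
  refine ⟨S4.connected_Gd d hd, ?_⟩
  have i0 : Finite (S4.V0 d) := Finite.of_equiv _ (S4.e0 d).symm
  have i1 : Finite (S4.V1 d) := Finite.of_equiv _ (S4.e1 d).symm
  have c0 : Nat.card (S4.V0 d) = d / 2 + 1 := by
    rw [Nat.card_congr (S4.e0 d)]; simp
  have c1 : Nat.card (S4.V1 d) = d / 2 * ((d + 1) / 2) := by
    rw [Nat.card_congr (S4.e1 d), Nat.card_prod]; simp
  have hv : Nat.card (GdVert d) = (d / 2 + 1) + d / 2 * ((d + 1) / 2) := by
    rw [← Nat.card_eq_of_bijective _ (S4.vertMap_bij d), Nat.card_sum, c0, c1]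
  have he : Nat.card (Gd d).edgeSet = d / 2 * ((d + 1) / 2) * 2 := by
    rw [← Nat.card_eq_of_bijective _ (S4.edgeMap_bij d), Nat.card_prod, c1]
    simp [Nat.card_eq_fintype_card]
  rw [hv, he]
  rcases Nat.even_or_odd d with ⟨c, rfl⟩ | ⟨c, rfl⟩
  · obtain ⟨c, rfl⟩ : ∃ c', c = c' + 1 := ⟨c - 1, by omega⟩
    have h1 : (c + 1 + (c + 1)) / 2 = c + 1 := by omega
    have h2 : (c + 1 + (c + 1) + 1) / 2 = c + 1 := by omega
    have h3 : wedgeRank (c + 1 + (c + 1)) = c * (c + 1) := by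
      rw [wedgeRank, if_pos ⟨c + 1, rfl⟩,
        show c + 1 + (c + 1) - 2 = c + c from by omega,
        show (c + 1 + (c + 1)) * (c + c) = c * (c + 1) * 4 from by ring]
      exact Nat.mul_div_cancel _ (by norm_num)
    rw [h1, h2, h3]; ring
  · have h1 : (2 * c + 1) / 2 = c := by omega
    have h2 : (2 * c + 1 + 1) / 2 = c + 1 := by omega
    have h3 : wedgeRank (2 * c + 1) = c * c := by
      rw [wedgeRank, if_neg (by rw [Nat.even_iff]; omega),
        show 2 * c + 1 - 1 = 2 * c from by omega,
        show (2 * c) ^ 2 = c * c * 4 from by ring]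
      exact Nat.mul_div_cancel _ (by norm_num)
    rw [h1, h2, h3]; ring
end

section
/- Let d ≥ 1 and let Θ ⊆ Ω_{⟨d]} be a closed set of compositions. Then the space 𝒫_{d+1}^{crit,cΘ} := {P ∈ 𝒫_{d+1} : (1/(d+1))·P′ ∈ 𝒫_d^{cΘ}}, i.e. the space of monic real polynomials of degree d+1 whose derivative's real root multiplicity pattern does not lie in Θ, is homotopy equivalent to 𝒫_d^{cΘ}. -/
open Polynomial

/-- `𝒫_{d+1}^{crit, cΘ}`: monic polynomials of degree `d+1` such that the monic
normalization `(1/(d+1))·P'` of the derivative lies in `𝒫_d^{cΘ}`, i.e. the real root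
multiplicity pattern of the derivative does not lie in `Θ`. -/
def critSet (d : ℕ) (Θ : Set (List ℕ)) : Set (Fin (d + 1) → ℝ) :=
  {b | ¬ ∃ ω ∈ Θ,
    HasPattern ((((d : ℝ) + 1)⁻¹) • Polynomial.derivative (monicPoly (d + 1) b)) ω}

noncomputable def Dmap (d : ℕ) (b : Fin (d+1) → ℝ) : Fin d → ℝ :=
  fun i => ((i:ℝ)+1) * b i.succ / ((d:ℝ)+1)

noncomputable def Gmap (d : ℕ) (a : Fin d → ℝ) : Fin (d+1) → ℝ :=
  Fin.cons 0 (fun i => ((d:ℝ)+1) * a i / ((i:ℝ)+1))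

lemma deriv_monicPoly (d : ℕ) (b : Fin (d+1) → ℝ) :
    (((d:ℝ)+1)⁻¹) • Polynomial.derivative (monicPoly (d+1) b) = monicPoly d (Dmap d b) := by
  have hd : ((d:ℝ)+1) ≠ 0 := by positivity
  simp only [monicPoly, derivative_add, derivative_X_pow, derivative_sum, derivative_C_mul,
    Fin.sum_univ_succ, Fin.val_zero, pow_zero, derivative_one, mul_zero, zero_add,
    Fin.val_succ, Dmap]
  rw [smul_add, Finset.smul_sum]
  congr 1
  · rw [smul_eq_C_mul]
    rw [show ((d:ℕ)+1-1) = d from rfl, ← mul_assoc, ← C_mul]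
    push_cast
    rw [inv_mul_cancel₀ hd, C_1, one_mul]
  · apply Finset.sum_congr rfl
    intro i _
    rw [smul_eq_C_mul]
    have : (i:ℕ) + 1 - 1 = (i:ℕ) := rfl
    rw [this, ← mul_assoc, ← mul_assoc, ← C_mul, ← C_mul]
    congr 2
    push_cast
    field_simp

lemma mem_crit_iff (d : ℕ) (Θ : Set (List ℕ)) (b : Fin (d+1) → ℝ) :
    b ∈ critSet d Θ ↔ Dmap d b ∈ PcTheta d Θ := by
  simp only [critSet, PcTheta, PTheta, Set.mem_setOf_eq, Set.mem_compl_iff,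
    deriv_monicPoly]

lemma Dmap_cons (d : ℕ) (s : ℝ) (c : Fin d → ℝ) :
    Dmap d (Fin.cons s c) = fun i : Fin d => (((i:ℕ):ℝ)+1) * c i / ((d:ℝ)+1) := by
  funext i
  simp [Dmap, Fin.cons_succ]

lemma Dmap_Gmap (d : ℕ) (a : Fin d → ℝ) : Dmap d (Gmap d a) = a := by
  rw [Gmap, Dmap_cons]
  funext i
  have h1 : ((i:ℝ)+1) ≠ 0 := by positivity
  have h2 : ((d:ℝ)+1) ≠ 0 := by positivity
  field_simp

lemma Gmap_Dmap (d : ℕ) (b : Fin (d+1) → ℝ) :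
    Gmap d (Dmap d b) = Fin.cons 0 (fun i => b i.succ) := by
  funext j
  refine Fin.cases ?_ ?_ j
  · simp [Gmap]
  · intro i
    simp only [Gmap, Dmap, Fin.cons_succ]
    have h1 : ((i:ℝ)+1) ≠ 0 := by positivity
    have h2 : ((d:ℝ)+1) ≠ 0 := by positivity
    field_simp

/-- For any closed `Θ ⊆ Ω_{⟨d]}`, the space `𝒫_{d+1}^{crit,cΘ}` is
homotopy equivalent to `𝒫_d^{cΘ}`. -/
theorem statement16 (d : ℕ) (hd : 1 ≤ d) (Θ : Set (List ℕ)) (hΘ : Θ ⊆ OmegaLe d)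
    (hcl : IsClosed (PTheta d Θ)) :
    Nonempty (ContinuousMap.HomotopyEquiv ↥(critSet d Θ) ↥(PcTheta d Θ)) := by
  have hDcont : Continuous (Dmap d) := by
    unfold Dmap; fun_prop
  have hGcont : Continuous (Gmap d) := by
    apply continuous_pi
    intro j
    refine Fin.cases ?_ ?_ j
    · simpa [Gmap] using continuous_const
    · intro i
      simp only [Gmap, Fin.cons_succ]
      fun_prop
  let F : C(↥(critSet d Θ), ↥(PcTheta d Θ)) :=
    ⟨fun p => ⟨Dmap d p.1, (mem_crit_iff d Θ p.1).mp p.2⟩, by fun_prop⟩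
  let G : C(↥(PcTheta d Θ), ↥(critSet d Θ)) :=
    ⟨fun p => ⟨Gmap d p.1, by rw [mem_crit_iff, Dmap_Gmap]; exact p.2⟩, by fun_prop⟩
  refine ⟨⟨F, G, ?_, ?_⟩⟩
  · -- left_inv : homotopy from G ∘ F to id
    refine ⟨⟨⟨fun p => ⟨Fin.cons ((p.1:ℝ) * p.2.1 0) (fun i => p.2.1 i.succ), ?_⟩, ?_⟩,
      ?_, ?_⟩⟩
    · rw [mem_crit_iff, Dmap_cons]
      have := (mem_crit_iff d Θ p.2.1).mp p.2.2
      convert this using 2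
      simp [Dmap]
    · apply Continuous.subtype_mk
      apply continuous_pi
      intro j
      refine Fin.cases ?_ ?_ j
      · simp only [Fin.cons_zero]
        exact (continuous_subtype_val.comp continuous_fst).mul
          ((continuous_apply (0 : Fin (d+1))).comp
            (continuous_subtype_val.comp continuous_snd))
      · intro i
        simp only [Fin.cons_succ]
        exact (continuous_apply i.succ).comp (continuous_subtype_val.comp continuous_snd)
    · intro b
      apply Subtype.ext
      show Fin.cons ((0:ℝ) * b.1 0) (fun i => b.1 i.succ) = Gmap d (Dmap d b.1)
      rw [Gmap_Dmap, zero_mul]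
    · intro b
      apply Subtype.ext
      show Fin.cons ((1:ℝ) * b.1 0) (fun i => b.1 i.succ) = b.1
      rw [one_mul]
      exact Fin.cons_self_tail b.1
  · -- right_inv : F ∘ G = id
    have : F.comp G = ContinuousMap.id _ := by
      ext p
      show (Dmap d (Gmap d p.1) : Fin d → ℝ) _ = _
      rw [Dmap_Gmap]
      rfl
    rw [this]
end
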